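/- With $\chi_t(z) = \omega(t)^{-1} f_t(z)$ as above, for all $z \in \mathbb{C}_\infty$ with $|z| < q$, one has $\|\chi_t(z)\| = |z|$ (Gauss norm on $\mathbb{T}$). In particular, $\chi_t$ restricts to an injective $\mathbb{F}_q$-linear map from $\{z \in \mathbb{C}_\infty : |z| < q\}$ to $\{f \in \mathbb{T} : \|f\| < q\}$. -/

import Mathlib

noncomputable section

open Polynomial Filter PowerSeries

/-- `d_i = ∏_{j=0}^{i-1} (θ^{q^i} - θ^{q^j})`, with `d_0 = 1`. -/
def carlitzD (Cinf : Type*) [Field Cinf] (θ : Cinf) (q i : ℕ) : Cinf :=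
  ∏ j ∈ Finset.range i, (θ ^ q ^ i - θ ^ q ^ j)

/-- The Carlitz exponential `exp_C(z) = ∑_{i ≥ 0} d_i⁻¹ z^{q^i}`. -/
def expC (Cinf : Type*) [NormedField Cinf] (θ : Cinf) (q : ℕ) (z : Cinf) : Cinf :=
  ∑' i : ℕ, (carlitzD Cinf θ q i)⁻¹ * z ^ q ^ i

/-- `e_C(z) = exp_C(π̃ z)`. -/
def eC (Cinf : Type*) [NormedField Cinf] (θ π : Cinf) (q : ℕ) (z : Cinf) : Cinf :=
  expC Cinf θ q (π * z)

/-- The `N`-th partial sum of the Anderson generating function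
`f_t(z) = ∑_{n ≥ 0} (π̃ z)^{q^n} / ((θ^{q^n} - t) d_n)`, as a power series in `t`. -/
def ftPartial (Cinf : Type*) [NormedField Cinf] (θ π : Cinf) (q : ℕ) (z : Cinf) (N : ℕ) :
    PowerSeries Cinf :=
  ∑ n ∈ Finset.range N,
    PowerSeries.C ((π * z) ^ q ^ n * (carlitzD Cinf θ q n)⁻¹) *
      (PowerSeries.C (θ ^ q ^ n) - PowerSeries.X)⁻¹

/-- The Gauss norm `‖∑ c_m t^m‖ = sup_m |c_m|` on `ℂ∞[[t]]` (finite on the Tate algebra). -/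
def gaussNorm (Cinf : Type*) [NormedField Cinf] (f : PowerSeries Cinf) : ℝ :=
  ⨆ m : ℕ, ‖PowerSeries.coeff m f‖

section Aux

set_option linter.unusedSectionVars false

variable {K : Type*} [NormedField K] [IsUltrametricDist K]

lemma st14_norm_add_eq {a b : K} (h : ‖b‖ < ‖a‖) : ‖a + b‖ = ‖a‖ := by
  rw [IsUltrametricDist.norm_add_eq_max_of_norm_ne_norm (by exact (h.trans_le le_rfl).ne'),
    max_eq_left h.le]

lemma st14_norm_sub_eq {a b : K} (h : ‖b‖ < ‖a‖) : ‖a - b‖ = ‖a‖ := by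
  rw [sub_eq_add_neg, st14_norm_add_eq (by rwa [norm_neg])]

lemma st14_coeff_geom {k : Type*} [Field k] (a : k) (m : ℕ) :
    PowerSeries.coeff m (1 - PowerSeries.C a * PowerSeries.X)⁻¹ = a ^ m := by
  have h0 : PowerSeries.constantCoeff (1 - PowerSeries.C a * PowerSeries.X) ≠ 0 := by simp
  have h : (PowerSeries.mk fun n => a ^ n) = (1 - PowerSeries.C a * PowerSeries.X)⁻¹ := by
    rw [PowerSeries.eq_inv_iff_mul_eq_one h0]
    ext n
    rcases n with _ | n
    · simp [mul_sub, mul_comm]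
    · simp only [mul_sub, mul_one, map_sub, ← mul_assoc, PowerSeries.coeff_mul_C,
        PowerSeries.coeff_succ_mul_X, PowerSeries.coeff_mk, PowerSeries.coeff_one, pow_succ]
      ring_nf
      simp
  rw [← h, PowerSeries.coeff_mk]

lemma st14_coeff_sub_inv {k : Type*} [Field k] {b : k} (hb : b ≠ 0) (m : ℕ) :
    PowerSeries.coeff m (PowerSeries.C b - PowerSeries.X)⁻¹ = b⁻¹ ^ (m + 1) := by
  have h0 : PowerSeries.constantCoeff (PowerSeries.C b - PowerSeries.X) ≠ 0 := by
    simpa using hb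
  have h : (PowerSeries.mk fun n => b⁻¹ ^ (n + 1)) =
      (PowerSeries.C b - PowerSeries.X)⁻¹ := by
    rw [PowerSeries.eq_inv_iff_mul_eq_one h0]
    ext n
    rcases n with _ | n
    · simp [mul_sub, inv_mul_cancel₀ hb]
    · simp only [mul_sub, map_sub, PowerSeries.coeff_mul_C, PowerSeries.coeff_succ_mul_X,
        PowerSeries.coeff_mk, PowerSeries.coeff_one, pow_succ]
      field_simp
      ring_nf
      simp
  rw [← h, PowerSeries.coeff_mk]

lemma st14_norm_carlitzD {θ : K} {q : ℕ} (hq : 2 ≤ q) (hθ : 1 < ‖θ‖) (n : ℕ) :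
    ‖carlitzD K θ q n‖ = ‖θ‖ ^ (n * q ^ n) := by
  rw [carlitzD, norm_prod]
  have h : ∀ j ∈ Finset.range n, ‖θ ^ q ^ n - θ ^ q ^ j‖ = ‖θ‖ ^ q ^ n := by
    intro j hj
    rw [st14_norm_sub_eq, norm_pow]
    rw [norm_pow, norm_pow]
    exact pow_lt_pow_right₀ hθ (Nat.pow_lt_pow_right (by omega) (Finset.mem_range.mp hj))
  rw [Finset.prod_congr rfl h, Finset.prod_const, Finset.card_range, ← pow_mul, mul_comm]

lemma st14_coeff_ftPartial (θ π : K) (hθ : θ ≠ 0) (q : ℕ) (z : K) (N m : ℕ) :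
    PowerSeries.coeff m (ftPartial K θ π q z N) =
      ∑ n ∈ Finset.range N,
        (π * z) ^ q ^ n * (carlitzD K θ q n)⁻¹ * ((θ ^ q ^ n)⁻¹) ^ (m + 1) := by
  rw [ftPartial, map_sum]
  refine Finset.sum_congr rfl fun n _ => ?_
  rw [PowerSeries.coeff_C_mul, st14_coeff_sub_inv (pow_ne_zero _ hθ), mul_assoc]

lemma st14_nat_ineq {q n : ℕ} (hq : 2 ≤ q) (hn : 1 ≤ n) :
    q * (q ^ n - 1) ≤ n * q ^ n * (q - 1) := by
  rcases eq_or_lt_of_le hn with h1 | h2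
  · subst h1
    simp [pow_one]
  · have hA : q ≤ q ^ n := Nat.le_self_pow (by omega) q
    have hAB : q ^ n * 1 ≤ q ^ n * (q - 1) := Nat.mul_le_mul_left _ (by omega)
    calc q * (q ^ n - 1) ≤ q * q ^ n := Nat.mul_le_mul_left _ (Nat.sub_le _ _)
      _ ≤ 2 * q ^ n * (q - 1) := by
          have hq1 : q = (q - 1) + 1 := by omega
          nlinarith [hAB]
      _ ≤ n * q ^ n * (q - 1) := by
          have : 2 * q ^ n ≤ n * q ^ n := Nat.mul_le_mul_right _ (by omega)
          exact Nat.mul_le_mul_right _ this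

lemma st14_pow_bound {P Q : ℝ} {q n : ℕ} (hq : 2 ≤ q) (hn : 1 ≤ n) (hP : 0 ≤ P)
    (hQ : 1 < Q) (hPq : P ^ (q - 1) = Q ^ q) : P ^ (q ^ n - 1) ≤ Q ^ (n * q ^ n) := by
  have hQ0 : (0:ℝ) ≤ Q := by linarith
  rw [← pow_le_pow_iff_left₀ (pow_nonneg hP _) (pow_nonneg hQ0 _) (show q - 1 ≠ 0 by omega)]
  rw [← pow_mul, ← pow_mul]
  rw [show (q ^ n - 1) * (q - 1) = (q - 1) * (q ^ n - 1) from Nat.mul_comm _ _, pow_mul, hPq,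
    ← pow_mul]
  exact pow_le_pow_right₀ hQ.le (by
    calc q * (q ^ n - 1) ≤ n * q ^ n * (q - 1) := st14_nat_ineq hq hn
      _ ≤ n * q ^ n * (q - 1) := le_rfl)

end Aux

/-- for `|z| < q` one has `‖χ_t(z)‖ = |z|` (Gauss norm);  in particular
`χ_t` restricts to an injective `𝔽_q`-linear map from `{z : |z| < q}` into
`{f ∈ 𝕋 : ‖f‖ < q}`. -/
theorem statement14
    (Fq : Type*) [Field Fq] [Fintype Fq]
    (Cinf : Type*) [NormedField Cinf] [CompleteSpace Cinf] [IsAlgClosed Cinf]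
    [IsUltrametricDist Cinf] [Algebra Fq Cinf] (θ : Cinf)
    (q : ℕ) (hq : q = Fintype.card Fq) (hθ : ‖θ‖ = (q : ℝ))
    (π : Cinf) (hπ : ‖π‖ = (q : ℝ) ^ ((q : ℝ) / ((q : ℝ) - 1)))
    (hker : ∀ z : Cinf, expC Cinf θ q z = 0 ↔ ∃ a : Polynomial Fq, z = π * aeval θ a)
    (lam : Cinf) (hlam : lam ^ (q - 1) = -θ)
    (ω : PowerSeries Cinf)
    (hω : ∀ m : ℕ,
      Tendsto
        (fun N : ℕ => PowerSeries.coeff m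
          (PowerSeries.C lam *
            ∏ i ∈ Finset.range N,
              (1 - PowerSeries.C ((θ ^ q ^ i)⁻¹) * PowerSeries.X)⁻¹))
        atTop (nhds (PowerSeries.coeff m ω)))
    (ft : Cinf → PowerSeries Cinf)
    (hft : ∀ (z : Cinf) (m : ℕ),
      Tendsto (fun N : ℕ => PowerSeries.coeff m (ftPartial Cinf θ π q z N))
        atTop (nhds (PowerSeries.coeff m (ft z))))
    (chi : Cinf → PowerSeries Cinf)
    (hchi : ∀ z : Cinf, chi z = ω⁻¹ * ft z) :
    (∀ z : Cinf, ‖z‖ < (q : ℝ) → gaussNorm Cinf (chi z) = ‖z‖) ∧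
    Set.MapsTo chi {z : Cinf | ‖z‖ < (q : ℝ)}
      {f : PowerSeries Cinf | gaussNorm Cinf f < (q : ℝ)} ∧
    Set.InjOn chi {z : Cinf | ‖z‖ < (q : ℝ)} := by
  clear hker
  -- numerology
  have hq2 : 2 ≤ q := by rw [hq]; exact Fintype.one_lt_card
  have hQ1 : (1:ℝ) < (q:ℝ) := by exact_mod_cast (by omega : 1 < q)
  have hQ0 : (0:ℝ) < (q:ℝ) := by linarith
  have hθ1 : 1 < ‖θ‖ := by rw [hθ]; exact hQ1
  have hθ0 : θ ≠ 0 := by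
    intro h; rw [h, norm_zero] at hθ; linarith
  have hlamQ : ‖lam‖ ^ (q - 1) = (q:ℝ) := by rw [← norm_pow, hlam, norm_neg, hθ]
  have hlam_pos : 0 < ‖lam‖ := by
    rcases eq_or_lt_of_le (norm_nonneg lam) with h | h
    · exfalso; rw [← h, zero_pow (by omega : q - 1 ≠ 0)] at hlamQ; linarith
    · exact h
  have hlam0 : lam ≠ 0 := by
    intro h; rw [h, norm_zero] at hlam_pos; exact lt_irrefl _ hlam_pos
  have hπpow : ‖π‖ ^ (q - 1) = (q:ℝ) ^ q := by
    rw [hπ, ← Real.rpow_natCast ((q:ℝ) ^ ((q:ℝ) / ((q:ℝ) - 1))) (q - 1),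
      ← Real.rpow_mul hQ0.le]
    rw [Nat.cast_sub (by omega : 1 ≤ q), Nat.cast_one,
      div_mul_cancel₀ _ (by linarith : (q:ℝ) - 1 ≠ 0), Real.rpow_natCast]
  have hπeq : ‖π‖ = (q:ℝ) * ‖lam‖ := by
    have h1 : ((q:ℝ) * ‖lam‖) ^ (q - 1) = (q:ℝ) ^ q := by
      rw [mul_pow, hlamQ, ← pow_succ]
      congr 1
      omega
    exact (pow_left_inj₀ (norm_nonneg π) (by positivity) (by omega : q - 1 ≠ 0)).mp
      (hπpow.trans h1.symm)
  have hπ_pos : 0 < ‖π‖ := by rw [hπeq]; positivity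
  -- the key norm computation for the coefficients of `ft z`
  have keynorm : ∀ z : Cinf, z ≠ 0 → ‖z‖ < (q:ℝ) → ∀ m : ℕ,
      ‖PowerSeries.coeff m (ft z)‖ = ‖lam‖ * ‖z‖ / (q:ℝ) ^ m := by
    intro z hz0 hzq m
    set c : ℝ := ‖lam‖ * ‖z‖ / (q:ℝ) ^ m with hc
    have hz_pos : 0 < ‖z‖ := norm_pos_iff.mpr hz0
    have hQm : (0:ℝ) < (q:ℝ) ^ m := pow_pos hQ0 m
    have hc_pos : 0 < c := by rw [hc]; positivity
    set t : ℕ → Cinf := fun n =>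
      (π * z) ^ q ^ n * (carlitzD Cinf θ q n)⁻¹ * ((θ ^ q ^ n)⁻¹) ^ (m + 1) with ht
    have hnorm_t : ∀ n, ‖t n‖ =
        (‖π‖ * ‖z‖) ^ q ^ n * ((q:ℝ) ^ (n * q ^ n))⁻¹ * (((q:ℝ) ^ q ^ n)⁻¹) ^ (m + 1) := by
      intro n
      rw [ht]
      simp only [norm_mul, norm_pow, norm_inv]
      rw [st14_norm_carlitzD hq2 hθ1, hθ]
    have h0 : ‖t 0‖ = c := by
      rw [hnorm_t 0]
      simp only [pow_zero, Nat.zero_mul, Nat.mul_zero, zero_mul, mul_zero, pow_one, inv_one,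
        mul_one]
      rw [hπeq, hc, inv_pow, pow_succ]
      field_simp
    have htail : ∀ n, 1 ≤ n → ‖t n‖ ≤ (‖z‖ / (q:ℝ)) * c := by
      intro n hn
      have hA2 : 2 ≤ q ^ n := le_trans hq2 (Nat.le_self_pow (by omega) q)
      have hval : ‖t n‖ = (‖π‖ * ‖z‖ / (q:ℝ) ^ (m + 1)) ^ q ^ n / (q:ℝ) ^ (n * q ^ n) := by
        rw [hnorm_t n, div_pow, div_div, ← pow_mul, inv_pow, ← pow_mul, div_eq_mul_inv, mul_inv,
          ← mul_assoc, mul_right_comm, Nat.mul_comm (q ^ n) (m + 1)]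
      have hcw : ‖π‖ * ‖z‖ / (q:ℝ) ^ (m + 1) = c := by
        rw [hπeq, hc, pow_succ]
        field_simp
      rw [hval, hcw]
      -- c ≤ ‖π‖
      have h1m : (1:ℝ) ≤ (q:ℝ) ^ m := one_le_pow₀ hQ1.le
      have hcπ : c ≤ ‖π‖ := by
        rw [hc, hπeq, div_le_iff₀ hQm]
        nlinarith [mul_le_mul_of_nonneg_left hzq.le hlam_pos.le,
          mul_le_mul_of_nonneg_left h1m (by positivity : (0:ℝ) ≤ (q:ℝ) * ‖lam‖)]
      have hπQ : ‖π‖ ^ (q ^ n - 1) ≤ (q:ℝ) ^ (n * q ^ n) :=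
        st14_pow_bound hq2 hn hπ_pos.le hQ1 hπpow
      -- key : c^{q^n} * ‖π‖ ≤ c^2 * Q^{n q^n}
      have e1 : c ^ q ^ n = c ^ 2 * c ^ (q ^ n - 2) := by
        rw [← pow_add]; congr 1; omega
      have e2 : c ^ (q ^ n - 2) ≤ ‖π‖ ^ (q ^ n - 2) := pow_le_pow_left₀ hc_pos.le hcπ _
      have e3 : ‖π‖ ^ (q ^ n - 2) * ‖π‖ = ‖π‖ ^ (q ^ n - 1) := by
        rw [← pow_succ]; congr 1; omega
      have key : c ^ q ^ n * ‖π‖ ≤ c ^ 2 * (q:ℝ) ^ (n * q ^ n) := by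
        calc c ^ q ^ n * ‖π‖ = c ^ 2 * (c ^ (q ^ n - 2) * ‖π‖) := by rw [e1]; ring
          _ ≤ c ^ 2 * (‖π‖ ^ (q ^ n - 2) * ‖π‖) := by
              exact mul_le_mul_of_nonneg_left (mul_le_mul_of_nonneg_right e2 hπ_pos.le)
                (sq_nonneg c)
          _ = c ^ 2 * ‖π‖ ^ (q ^ n - 1) := by rw [e3]
          _ ≤ c ^ 2 * (q:ℝ) ^ (n * q ^ n) := mul_le_mul_of_nonneg_left hπQ (sq_nonneg c)
      -- c * q ≤ ‖π‖ * ‖z‖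
      have hcz : c * (q:ℝ) ≤ ‖π‖ * ‖z‖ := by
        have he : c * (q:ℝ) ^ (m + 1) = ‖π‖ * ‖z‖ := by
          rw [← hcw, div_mul_cancel₀ _ (by positivity : ((q:ℝ)) ^ (m + 1) ≠ 0)]
        rw [← he]
        have hle : (q:ℝ) ≤ (q:ℝ) ^ (m + 1) := by
          calc (q:ℝ) = (q:ℝ) ^ 1 := (pow_one _).symm
            _ ≤ (q:ℝ) ^ (m + 1) := pow_le_pow_right₀ hQ1.le (by omega)
        exact mul_le_mul_of_nonneg_left hle hc_pos.le
      rw [div_le_iff₀ (pow_pos hQ0 _), div_mul_eq_mul_div, div_mul_eq_mul_div,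
        le_div_iff₀ hQ0]
      have h5 : c ^ q ^ n * (q:ℝ) * ‖π‖ ≤ ‖z‖ * c * (q:ℝ) ^ (n * q ^ n) * ‖π‖ := by
        calc c ^ q ^ n * (q:ℝ) * ‖π‖ = c ^ q ^ n * ‖π‖ * (q:ℝ) := by ring
          _ ≤ c ^ 2 * (q:ℝ) ^ (n * q ^ n) * (q:ℝ) := mul_le_mul_of_nonneg_right key hQ0.le
          _ = (c * (q:ℝ)) * (c * (q:ℝ) ^ (n * q ^ n)) := by ring
          _ ≤ (‖π‖ * ‖z‖) * (c * (q:ℝ) ^ (n * q ^ n)) :=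
              mul_le_mul_of_nonneg_right hcz (by positivity)
          _ = ‖z‖ * c * (q:ℝ) ^ (n * q ^ n) * ‖π‖ := by ring
      exact le_of_mul_le_mul_right h5 hπ_pos
    -- the norm of every partial sum with at least one term is `c`
    have hSnorm : ∀ N, 1 ≤ N → ‖∑ n ∈ Finset.range N, t n‖ = c := by
      intro N hN
      have hsplit : ∑ n ∈ Finset.range N, t n = t 0 + ∑ n ∈ Finset.Ico 1 N, t n := by
        rw [Finset.range_eq_Ico, Finset.sum_eq_sum_Ico_succ_bot (by omega) t]
      have htail_le : ‖∑ n ∈ Finset.Ico 1 N, t n‖ ≤ (‖z‖ / (q:ℝ)) * c :=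
        IsUltrametricDist.norm_sum_le_of_forall_le_of_nonneg (by positivity)
          (fun i hi => htail i (Finset.mem_Ico.mp hi).1)
      have hlt : (‖z‖ / (q:ℝ)) * c < c := by
        have hd : ‖z‖ / (q:ℝ) < 1 := (div_lt_one hQ0).mpr hzq
        have := mul_lt_mul_of_pos_right hd hc_pos
        rwa [one_mul] at this
      rw [hsplit, st14_norm_add_eq (htail_le.trans_lt (hlt.trans_eq h0.symm))]
      exact h0
    -- pass to the limit
    have hcoeff_eq : ∀ N, PowerSeries.coeff m (ftPartial Cinf θ π q z N) =
        ∑ n ∈ Finset.range N, t n := fun N => st14_coeff_ftPartial θ π hθ0 q z N m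
    have h1 : Tendsto (fun N => ‖∑ n ∈ Finset.range N, t n‖) atTop
        (nhds ‖PowerSeries.coeff m (ft z)‖) :=
      (((hft z m).congr (fun N => hcoeff_eq N))).norm
    have h2 : Tendsto (fun N => ‖∑ n ∈ Finset.range N, t n‖) atTop (nhds c) := by
      refine Tendsto.congr' ?_ tendsto_const_nhds
      filter_upwards [eventually_ge_atTop 1] with N hN
      exact (hSnorm N hN).symm
    exact tendsto_nhds_unique h1 h2
  -- constant coefficient of ω
  have hwc0 : PowerSeries.constantCoeff ω = lam := by
    have hconst : ∀ N : ℕ, PowerSeries.coeff 0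
        (PowerSeries.C lam * ∏ i ∈ Finset.range N,
          (1 - PowerSeries.C ((θ ^ q ^ i)⁻¹) * PowerSeries.X)⁻¹) = lam := by
      intro N
      rw [PowerSeries.coeff_zero_eq_constantCoeff, map_mul, PowerSeries.constantCoeff_C,
        map_prod]
      have : ∀ i ∈ Finset.range N, PowerSeries.constantCoeff
          ((1 - PowerSeries.C ((θ ^ q ^ i)⁻¹) * PowerSeries.X)⁻¹) = 1 := by
        intro i _
        rw [PowerSeries.constantCoeff_inv]
        simp
      rw [Finset.prod_congr rfl this, Finset.prod_const_one, mul_one]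
    have h := hω 0
    rw [funext hconst] at h
    have := tendsto_nhds_unique h tendsto_const_nhds
    rw [← PowerSeries.coeff_zero_eq_constantCoeff_apply, this]
  -- bound on the coefficients of ω
  have hG : ∀ N m : ℕ, ‖PowerSeries.coeff m (∏ i ∈ Finset.range N,
      (1 - PowerSeries.C ((θ ^ q ^ i)⁻¹) * PowerSeries.X)⁻¹)‖ ≤ 1 := by
    intro N
    induction N with
    | zero =>
      intro m
      rcases m with _ | m <;>
        simp [PowerSeries.coeff_one]
    | succ N ih =>
      intro m
      rw [Finset.prod_range_succ, PowerSeries.coeff_mul]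
      refine IsUltrametricDist.norm_sum_le_of_forall_le_of_nonneg zero_le_one ?_
      rintro ⟨i, j⟩ _
      rw [norm_mul, st14_coeff_geom]
      have h2 : ‖((θ ^ q ^ N)⁻¹) ^ j‖ ≤ 1 := by
        rw [norm_pow, norm_inv, norm_pow, hθ]
        exact pow_le_one₀ (by positivity)
          (inv_le_one_of_one_le₀ (one_le_pow₀ hQ1.le))
      exact mul_le_one₀ (ih i) (norm_nonneg _) h2
  have hwb : ∀ m : ℕ, ‖PowerSeries.coeff m ω‖ ≤ ‖lam‖ := by
    intro m
    refine le_of_tendsto ((hω m).norm) (Filter.Eventually.of_forall fun N => ?_)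
    rw [PowerSeries.coeff_C_mul, norm_mul]
    calc ‖lam‖ * ‖PowerSeries.coeff m (∏ i ∈ Finset.range N,
          (1 - PowerSeries.C ((θ ^ q ^ i)⁻¹) * PowerSeries.X)⁻¹)‖
        ≤ ‖lam‖ * 1 := mul_le_mul_of_nonneg_left (hG N m) (norm_nonneg lam)
      _ = ‖lam‖ := mul_one _
  -- bound on the coefficients of ω⁻¹
  have hwinv : ∀ m : ℕ, ‖PowerSeries.coeff m ω⁻¹‖ ≤ ‖lam‖⁻¹ := by
    intro m
    induction m using Nat.strong_induction_on with
    | _ m ih =>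
      rcases m with _ | m
      · rw [PowerSeries.coeff_zero_eq_constantCoeff_apply, PowerSeries.constantCoeff_inv, hwc0,
          norm_inv]
      · have hmul : ω * ω⁻¹ = 1 := PowerSeries.mul_inv_cancel ω (by rw [hwc0]; exact hlam0)
        have h1 : PowerSeries.coeff (m + 1) (ω * ω⁻¹) = 0 := by
          rw [hmul]
          simp [PowerSeries.coeff_one]
        rw [PowerSeries.coeff_mul, Finset.Nat.sum_antidiagonal_eq_sum_range_succ_mk,
          Finset.sum_range_succ'] at h1
        simp only [Nat.succ_sub_succ, Nat.sub_zero] at h1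
        have h2 : PowerSeries.coeff 0 ω * PowerSeries.coeff (m + 1) ω⁻¹ =
            -∑ i ∈ Finset.range (m + 1),
              PowerSeries.coeff (i + 1) ω * PowerSeries.coeff (m - i) ω⁻¹ :=
          eq_neg_of_add_eq_zero_right h1
        have h3 : ‖lam‖ * ‖PowerSeries.coeff (m + 1) ω⁻¹‖ ≤ 1 := by
          rw [← norm_mul]
          have : ‖lam * PowerSeries.coeff (m + 1) ω⁻¹‖ =
              ‖PowerSeries.coeff 0 ω * PowerSeries.coeff (m + 1) ω⁻¹‖ := by
            rw [PowerSeries.coeff_zero_eq_constantCoeff_apply, hwc0]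
          rw [this, h2, norm_neg]
          refine IsUltrametricDist.norm_sum_le_of_forall_le_of_nonneg zero_le_one fun i _ => ?_
          rw [norm_mul]
          calc ‖PowerSeries.coeff (i + 1) ω‖ * ‖PowerSeries.coeff (m - i) ω⁻¹‖
              ≤ ‖lam‖ * ‖lam‖⁻¹ := mul_le_mul (hwb (i + 1))
                (ih (m - i) (Nat.lt_succ_of_le (Nat.sub_le m i))) (norm_nonneg _) hlam_pos.le
            _ = 1 := mul_inv_cancel₀ (ne_of_gt hlam_pos)
        calc ‖PowerSeries.coeff (m + 1) ω⁻¹‖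
            = ‖lam‖⁻¹ * (‖lam‖ * ‖PowerSeries.coeff (m + 1) ω⁻¹‖) := by
              field_simp
          _ ≤ ‖lam‖⁻¹ * 1 := mul_le_mul_of_nonneg_left h3 (by positivity)
          _ = ‖lam‖⁻¹ := mul_one _
  -- `ft 0 = 0`
  have hft0 : ft 0 = 0 := by
    apply PowerSeries.ext
    intro m
    have hzero : ∀ N : ℕ, PowerSeries.coeff m (ftPartial Cinf θ π q 0 N) = 0 := by
      intro N
      have hqn : ∀ n : ℕ, q ^ n ≠ 0 := fun n => pow_ne_zero n (by omega)
      simp [ftPartial, zero_pow, hqn, show q ≠ 0 by omega]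
    have h := hft 0 m
    rw [funext hzero] at h
    have := tendsto_nhds_unique h tendsto_const_nhds
    rw [this, map_zero]
  -- the main norm formula
  have main : ∀ z : Cinf, ‖z‖ < (q : ℝ) → gaussNorm Cinf (chi z) = ‖z‖ := by
    intro z hzq
    by_cases hz0 : z = 0
    · subst hz0
      rw [hchi, hft0, mul_zero, norm_zero, _root_.gaussNorm]
      simp only [map_zero, norm_zero]
      exact ciSup_const
    · have hub : ∀ m : ℕ, ‖PowerSeries.coeff m (chi z)‖ ≤ ‖z‖ := by
        intro m
        rw [hchi, PowerSeries.coeff_mul]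
        refine IsUltrametricDist.norm_sum_le_of_forall_le_of_nonneg (norm_nonneg z) ?_
        rintro ⟨i, j⟩ _
        rw [norm_mul]
        have h2 : ‖PowerSeries.coeff j (ft z)‖ ≤ ‖lam‖ * ‖z‖ := by
          rw [keynorm z hz0 hzq j]
          exact div_le_self (by positivity) (one_le_pow₀ hQ1.le)
        calc ‖PowerSeries.coeff i ω⁻¹‖ * ‖PowerSeries.coeff j (ft z)‖
            ≤ ‖lam‖⁻¹ * (‖lam‖ * ‖z‖) := mul_le_mul (hwinv i) h2 (norm_nonneg _)
              (by positivity)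
          _ = ‖z‖ := by field_simp
      have h00 : ‖PowerSeries.coeff 0 (chi z)‖ = ‖z‖ := by
        rw [hchi, PowerSeries.coeff_zero_eq_constantCoeff_apply, map_mul,
          PowerSeries.constantCoeff_inv, hwc0, norm_mul, norm_inv,
          ← PowerSeries.coeff_zero_eq_constantCoeff_apply, keynorm z hz0 hzq 0]
        rw [pow_zero, div_one]
        field_simp
      rw [_root_.gaussNorm]
      apply le_antisymm
      · exact ciSup_le hub
      · rw [← h00]
        refine le_ciSup (f := fun m => ‖PowerSeries.coeff m (chi z)‖) ?_ 0
        exact ⟨‖z‖, by rintro x ⟨m, rfl⟩; exact hub m⟩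
  refine ⟨main, ?_, ?_⟩
  · intro z hz
    simp only [Set.mem_setOf_eq] at hz ⊢
    rw [main z hz]
    exact hz
  · -- injectivity
    intro x hx y hy hxy
    simp only [Set.mem_setOf_eq] at hx hy
    have hunit : ω * ω⁻¹ = 1 := PowerSeries.mul_inv_cancel ω (by rw [hwc0]; exact hlam0)
    have hfteq : ft x = ft y := by
      have h := congrArg (fun f => ω * f) ((hchi x) ▸ (hchi y) ▸ hxy)
      simpa [← mul_assoc, hunit] using h
    -- characteristic p
    haveI : CharP Fq (ringChar Fq) := ringChar.charP Fq
    obtain ⟨s, hp, hcard⟩ := FiniteField.card Fq (ringChar Fq)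
    haveI hpf : Fact (Nat.Prime (ringChar Fq)) := ⟨hp⟩
    haveI : CharP Cinf (ringChar Fq) :=
      charP_of_injective_algebraMap (algebraMap Fq Cinf).injective _
    have hqp : q = ringChar Fq ^ (s : ℕ) := hq.trans hcard
    have hfrob : ∀ (a b : Cinf) (n : ℕ), (a - b) ^ q ^ n = a ^ q ^ n - b ^ q ^ n := by
      intro a b n
      rw [hqp, ← pow_mul]
      exact sub_pow_char_pow a b ((s : ℕ) * n)
    have hsub : ∀ m : ℕ, PowerSeries.coeff m (ft (x - y)) =
        PowerSeries.coeff m (ft x) - PowerSeries.coeff m (ft y) := by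
      intro m
      have hEq : ∀ N : ℕ, PowerSeries.coeff m (ftPartial Cinf θ π q (x - y) N) =
          PowerSeries.coeff m (ftPartial Cinf θ π q x N) -
            PowerSeries.coeff m (ftPartial Cinf θ π q y N) := by
        intro N
        rw [st14_coeff_ftPartial θ π hθ0 q (x - y) N m, st14_coeff_ftPartial θ π hθ0 q x N m,
          st14_coeff_ftPartial θ π hθ0 q y N m, ← Finset.sum_sub_distrib]
        refine Finset.sum_congr rfl fun n _ => ?_
        have hpxy : (π * (x - y)) ^ q ^ n = (π * x) ^ q ^ n - (π * y) ^ q ^ n := by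
          rw [show π * (x - y) = π * x - π * y from by ring, hfrob]
        rw [hpxy, sub_mul, sub_mul]
      have h2 : Tendsto (fun N : ℕ => PowerSeries.coeff m (ftPartial Cinf θ π q (x - y) N))
          atTop (nhds (PowerSeries.coeff m (ft x) - PowerSeries.coeff m (ft y))) :=
        (((hft x m).sub (hft y m)).congr (fun N => (hEq N).symm))
      exact tendsto_nhds_unique (hft (x - y) m) h2
    have hftxy : ft (x - y) = 0 := by
      apply PowerSeries.ext
      intro m
      rw [hsub m, hfteq, sub_self, map_zero]
    have hxy_lt : ‖x - y‖ < (q : ℝ) := by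
      have h := IsUltrametricDist.norm_add_le_max x (-y)
      rw [norm_neg] at h
      calc ‖x - y‖ = ‖x + -y‖ := by rw [sub_eq_add_neg]
        _ ≤ max ‖x‖ ‖y‖ := h
        _ < (q : ℝ) := max_lt hx hy
    have hzero : gaussNorm Cinf (chi (x - y)) = 0 := by
      rw [hchi, hftxy, mul_zero, _root_.gaussNorm]
      simp only [map_zero, norm_zero]
      exact ciSup_const
    have := (main (x - y) hxy_lt).symm.trans hzero
    have hxyz : x - y = 0 := by
      rwa [norm_eq_zero] at this
    exact sub_eq_zero.mp hxyz
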